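/- Let n > t+1 and let F ⊆ S_n be a t-cycle-intersecting family. For any i ≠ j ∈ [n], if the ij-fixing ◁_{ij}(F) is the stabilizer of t points, then F is also the stabilizer of t points. -/

import Mathlib

open Equiv Finset
open scoped Classical

noncomputable section

/-- A common cycle of two permutations `σ` and `π`: a nonempty subset `B` invariant
under both, on which they agree, and on which `σ` acts as a single cycle. -/
def IsCommonCycle {n : ℕ} (σ π : Equiv.Perm (Fin n)) (B : Finset (Fin n)) : Prop :=
  B.Nonempty ∧ (∀ x ∈ B, σ x ∈ B) ∧ (∀ x ∈ B, π x ∈ B) ∧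
  (∀ x ∈ B, σ x = π x) ∧ (∀ x ∈ B, ∀ y ∈ B, σ.SameCycle x y)

/-- A family of permutations is `t`-cycle-intersecting if any two of its members
have at least `t` common cycles on pairwise disjoint subsets. -/
def TCycleIntersecting {n : ℕ} (t : ℕ) (F : Set (Equiv.Perm (Fin n))) : Prop :=
  ∀ σ ∈ F, ∀ π ∈ F, ∃ 𝒞 : Finset (Finset (Fin n)),
    t ≤ 𝒞.card ∧ (∀ B ∈ 𝒞, IsCommonCycle σ π B) ∧
    (𝒞 : Set (Finset (Fin n))).Pairwise fun A B => Disjoint A B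

/-- The `ij`-fixing of a permutation: if `σ i = j` then make `i` a fixed point and
send `σ⁻¹ i` to `j`, leaving everything else unchanged. -/
def ijFix {n : ℕ} (i j : Fin n) (σ : Equiv.Perm (Fin n)) : Equiv.Perm (Fin n) :=
  if σ i = j then σ * Equiv.swap i (σ⁻¹ i) else σ

/-- The `ij`-fixing operation on a family of permutations. -/
def fixFamOp {n : ℕ} (i j : Fin n) (A : Set (Equiv.Perm (Fin n))) :
    Set (Equiv.Perm (Fin n)) :=
  (fun σ => if ijFix i j σ ∈ A then σ else ijFix i j σ) '' A

/-- A family is fixed if it is closed under all `ij`-fixing operations. -/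
def IsFixedFam {n : ℕ} (A : Set (Equiv.Perm (Fin n))) : Prop :=
  ∀ i j : Fin n, i ≠ j → fixFamOp i j A = A

/-- The `(i,j)`-compression of a permutation: if `σ i ≠ i` and `σ j = j`, then
fix `i`, send `j` to `σ i` and `σ⁻¹ i` to `j`; otherwise leave `σ` unchanged. -/
def compPerm {n : ℕ} (i j : Fin n) (σ : Equiv.Perm (Fin n)) : Equiv.Perm (Fin n) :=
  if σ i ≠ i ∧ σ j = j then (Equiv.swap i (σ i) * Equiv.swap i j) * σ else σ

/-- The `(i,j)`-compression operation on a family of permutations. -/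
def compFam {n : ℕ} (i j : Fin n) (A : Set (Equiv.Perm (Fin n))) :
    Set (Equiv.Perm (Fin n)) :=
  (fun σ => if compPerm i j σ ∈ A then σ else compPerm i j σ) '' A

/-- A family is compressed if it is closed under all `(i,j)`-compressions. -/
def IsCompressedFam {n : ℕ} (A : Set (Equiv.Perm (Fin n))) : Prop :=
  ∀ i j : Fin n, i < j → compFam i j A = A

/-- `F` is the stabilizer of `t` points: there are `t` distinct points such that `F`
consists exactly of the permutations fixing all of them. -/
def IsTPointStabilizer {n : ℕ} (t : ℕ) (F : Set (Equiv.Perm (Fin n))) : Prop :=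
  ∃ a : Fin t ↪ Fin n, F = {σ | ∀ k, σ (a k) = a k}

/-- The set of fixed points of a permutation. -/
def fixSet {n : ℕ} (σ : Equiv.Perm (Fin n)) : Finset (Fin n) :=
  Finset.univ.filter fun x => σ x = x

/-- The up-permutation of a set `B`: all permutations fixing every element of `B`. -/
def UpSet {n : ℕ} (B : Finset (Fin n)) : Set (Equiv.Perm (Fin n)) :=
  {σ | ∀ x ∈ B, σ x = x}

/-- The up-permutation of a collection of sets. -/
def UpFam {n : ℕ} (g : Set (Finset (Fin n))) : Set (Equiv.Perm (Fin n)) :=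
  ⋃ B ∈ g, UpSet B

/-- `g` is a generating set for `F`: it contains no set of size `n-1` and
`Up(g) = F`. -/
def IsGenSet {n : ℕ} (g : Set (Finset (Fin n))) (F : Set (Equiv.Perm (Fin n))) : Prop :=
  (∀ B ∈ g, B.card ≠ n - 1) ∧ UpFam g = F

/-- `s⁺(B)`: the largest element of `B`, in the 1-based numbering of `[n] = {1,…,n}`
(so `s⁺(∅) = 0`). -/
def sPlus {n : ℕ} (B : Finset (Fin n)) : ℕ := B.sup fun x => (x : ℕ) + 1

/-- `s⁺(g) = max {s⁺(B) : B ∈ g}`. -/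
def sPlusFam {n : ℕ} (g : Set (Finset (Fin n))) : ℕ := sSup (sPlus '' g)

/-- `s_min(G(F)) = min {s⁺(g) : g a generating set of F}`. -/
def sMin {n : ℕ} (F : Set (Equiv.Perm (Fin n))) : ℕ :=
  sInf (sPlusFam '' {g | IsGenSet g F})

/-- `L(B)`: all sets obtained from `B` by left-shifting, i.e. sets of the same size
whose `i`-th smallest element is at most the `i`-th smallest element of `B`. -/
def LSet {n : ℕ} (B : Finset (Fin n)) : Set (Finset (Fin n)) :=
  {A | ∃ h : A.card = B.card, ∀ i : Fin B.card,
      A.orderEmbOfFin h i ≤ B.orderEmbOfFin rfl i}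

/-- `L(g) = ⋃_{B ∈ g} L(B)`. -/
def LFam {n : ℕ} (g : Set (Finset (Fin n))) : Set (Finset (Fin n)) :=
  ⋃ B ∈ g, LSet B

/-- `L_*(g)`: the minimal (under inclusion) elements of `L(g)`. -/
def Lstar {n : ℕ} (g : Set (Finset (Fin n))) : Set (Finset (Fin n)) :=
  {A | A ∈ LFam g ∧ ∀ A' ∈ LFam g, A' ⊆ A → A' = A}

/-- The interval `[m] = {1,…,m}` inside `Fin n` (1-based). -/
def Ival (n m : ℕ) : Finset (Fin n) := Finset.univ.filter fun x => (x : ℕ) < m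

/-- `D(E) = {σ : fix(σ) ∩ [s⁺(E)] = E}`. -/
def DSet {n : ℕ} (E : Finset (Fin n)) : Set (Equiv.Perm (Fin n)) :=
  {σ | fixSet σ ∩ Ival n (sPlus E) = E}

/-- If `n > t+1`, `F` is `t`-cycle-intersecting and the `ij`-fixing of `F` is the
stabilizer of `t` points, then so is `F`. -/
lemma card_le_of_meets {n : ℕ} (𝒞 : Finset (Finset (Fin n))) (T : Finset (Fin n))
    (hdisj : (𝒞 : Set (Finset (Fin n))).Pairwise fun A B => Disjoint A B)
    (hmeet : ∀ B ∈ 𝒞, (B ∩ T).Nonempty) : 𝒞.card ≤ T.card := by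
  have h1 : 𝒞.card ≤ ∑ B ∈ 𝒞, (B ∩ T).card := by
    rw [Finset.card_eq_sum_ones]
    exact Finset.sum_le_sum fun B hB => (hmeet B hB).card_pos
  have h2 : ∑ B ∈ 𝒞, (B ∩ T).card = (𝒞.biUnion fun B => B ∩ T).card := by
    rw [Finset.card_biUnion]
    intro A hA B hB hAB
    exact (hdisj hA hB hAB).mono Finset.inter_subset_left Finset.inter_subset_left
  have h3 : (𝒞.biUnion fun B => B ∩ T) ⊆ T := by
    intro x hx
    simp only [Finset.mem_biUnion, Finset.mem_inter] at hx
    obtain ⟨B, _, _, hxT⟩ := hx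
    exact hxT
  calc 𝒞.card ≤ _ := h1
    _ = _ := h2
    _ ≤ T.card := Finset.card_le_card h3

lemma exists_cyc {n : ℕ} (S : Finset (Fin n)) (h2 : 2 ≤ S.card) :
    ∃ c : Equiv.Perm (Fin n),
      (∀ x, x ∉ S → c x = x) ∧ (∀ x ∈ S, c x ∈ S) ∧ (∀ x ∈ S, c x ≠ x) ∧
      (∀ B : Finset (Fin n), (∀ x ∈ B, c x ∈ B) → (∀ x ∈ B, x ∈ S) →
        B.Nonempty → ∀ y ∈ S, y ∈ B) := by
  obtain ⟨m, hm⟩ : ∃ m, S.card = m + 2 := ⟨S.card - 2, by omega⟩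
  let f : Fin (m + 2) ≃ {x : Fin n // x ∈ S} := (S.orderIsoOfFin hm).toEquiv
  set c : Equiv.Perm (Fin n) := (finRotate (m + 2)).extendDomain f with hc
  have hout : ∀ x, x ∉ S → c x = x := fun x hx =>
    Equiv.Perm.extendDomain_apply_not_subtype _ f hx
  have happ : ∀ x (hx : x ∈ S), c x = (f (finRotate (m + 2) (f.symm ⟨x, hx⟩)) : Fin n) :=
    fun x hx => Equiv.Perm.extendDomain_apply_subtype _ f hx
  have hin : ∀ x ∈ S, c x ∈ S := by
    intro x hx
    rw [happ x hx]
    exact (f _).2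
  have hmoves : ∀ z : Fin (m + 2), finRotate (m + 2) z ≠ z := by
    intro z
    have : z ∈ Equiv.Perm.support (finRotate (m + 2)) := by
      rw [support_finRotate]; exact Finset.mem_univ z
    exact Equiv.Perm.mem_support.mp this
  have hne : ∀ x ∈ S, c x ≠ x := by
    intro x hx hcx
    rw [happ x hx] at hcx
    have : f (finRotate (m + 2) (f.symm ⟨x, hx⟩)) = f (f.symm ⟨x, hx⟩) := by
      rw [Subtype.ext_iff, Equiv.apply_symm_apply]
      exact hcx
    exact hmoves _ (f.injective this)
  refine ⟨c, hout, hin, hne, ?_⟩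
  intro B hinv hsubS hBne y hyS
  obtain ⟨x, hxB⟩ := hBne
  have hxS := hsubS x hxB
  have hsc : c.SameCycle x y := by
    have h1 : (finRotate (m + 2)).SameCycle (f.symm ⟨x, hxS⟩) (f.symm ⟨y, hyS⟩) :=
      isCycle_finRotate.sameCycle (hmoves _) (hmoves _)
    have := h1.extendDomain (f := f)
    simpa using this
  obtain ⟨k, -, hk⟩ := hsc.exists_pow_eq'
  have hpow : ∀ l : ℕ, (c ^ l) x ∈ B := by
    intro l
    induction l with
    | zero => simpa using hxB
    | succ l ih =>
      rw [pow_succ']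
      exact hinv _ ih
  rw [← hk]
  exact hpow k

lemma perm_apply_inv_self' {α : Type*} (f : Equiv.Perm α) (x : α) : f (f⁻¹ x) = x :=
  f.apply_symm_apply x

theorem stmt1 {n t : ℕ} (hn : t + 1 < n) (F : Set (Equiv.Perm (Fin n)))
    (hF : TCycleIntersecting t F) (i j : Fin n) (hij : i ≠ j)
    (h : IsTPointStabilizer t (fixFamOp i j F)) :
    IsTPointStabilizer t F := by
  classical
  obtain ⟨a, hG⟩ := h
  set G : Set (Equiv.Perm (Fin n)) := {σ | ∀ k, σ (a k) = a k} with hGdef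
  have hMF : (fun σ => if ijFix i j σ ∈ F then σ else ijFix i j σ) '' F = G := hG
  -- basic ijFix facts
  have hfix_ne : ∀ σ : Equiv.Perm (Fin n), σ i ≠ j → ijFix i j σ = σ := fun σ hs => if_neg hs
  have hfix_eq : ∀ σ : Equiv.Perm (Fin n), σ i = j →
      ijFix i j σ = σ * Equiv.swap i (σ⁻¹ i) := fun σ hs => if_pos hs
  have hrec : ∀ σ : Equiv.Perm (Fin n), σ i = j →
      (ijFix i j σ) i = i ∧ (ijFix i j σ) (σ⁻¹ i) = j ∧
        ijFix i j σ * Equiv.swap i (σ⁻¹ i) = σ := by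
    intro σ hs
    rw [hfix_eq σ hs]
    refine ⟨?_, ?_, ?_⟩
    · rw [Equiv.Perm.mul_apply, Equiv.swap_apply_left, (perm_apply_inv_self' σ i)]
    · rw [Equiv.Perm.mul_apply, Equiv.swap_apply_right, hs]
    · rw [mul_assoc, Equiv.swap_mul_self, mul_one]
  -- dichotomy
  have dich : ∀ g, g ∈ G → g ∈ F ∨ (g i = i ∧ g * Equiv.swap i (g⁻¹ j) ∈ F) := by
    intro g hg
    rw [← hMF] at hg
    obtain ⟨τ, hτF, hτ'⟩ := hg
    have hτ : (if ijFix i j τ ∈ F then τ else ijFix i j τ) = g := hτ'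
    by_cases hin : ijFix i j τ ∈ F
    · rw [if_pos hin] at hτ
      exact Or.inl (hτ ▸ hτF)
    · rw [if_neg hin] at hτ
      by_cases hτi : τ i = j
      · obtain ⟨h1, h2, h3⟩ := hrec τ hτi
        right
        have hgi : g i = i := hτ ▸ h1
        have hginv : g⁻¹ j = τ⁻¹ i := by
          apply g.injective
          rw [(perm_apply_inv_self' g j), ← hτ, h2]
        rw [hginv, ← hτ, h3]
        exact ⟨h1, hτF⟩
      · rw [hfix_ne τ hτi] at hτ
        exact Or.inl (hτ ▸ hτF)
  -- injectivity of the fixing map on F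
  have hinj : Set.InjOn (fun σ => if ijFix i j σ ∈ F then σ else ijFix i j σ) F := by
    intro σ hσ τ hτ heq'
    have heq : (if ijFix i j σ ∈ F then σ else ijFix i j σ)
        = (if ijFix i j τ ∈ F then τ else ijFix i j τ) := heq'
    by_cases h1 : ijFix i j σ ∈ F <;> by_cases h2 : ijFix i j τ ∈ F
    · rwa [if_pos h1, if_pos h2] at heq
    · rw [if_pos h1, if_neg h2] at heq
      exact absurd (heq ▸ hσ) h2
    · rw [if_neg h1, if_pos h2] at heq
      exact absurd (heq.symm ▸ hτ) h1
    · rw [if_neg h1, if_neg h2] at heq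
      by_cases hσi : σ i = j
      · by_cases hτi : τ i = j
        · obtain ⟨_, h2σ, h3σ⟩ := hrec σ hσi
          obtain ⟨_, h2τ, h3τ⟩ := hrec τ hτi
          have hu : σ⁻¹ i = τ⁻¹ i := by
            apply (ijFix i j σ).injective
            rw [h2σ, heq, h2τ]
          rw [← h3σ, ← h3τ, heq, hu]
        · rw [hfix_ne τ hτi] at heq
          exact absurd (heq ▸ hτ) h1
      · rw [hfix_ne σ hσi] at heq
        exact absurd (heq.symm ▸ hσ) h2
  -- the main subset claim
  have hsub : F ⊆ G := by
    intro σ hσF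
    have hmem : (if ijFix i j σ ∈ F then σ else ijFix i j σ) ∈ G :=
      hMF ▸ Set.mem_image_of_mem _ hσF
    by_cases hinF : ijFix i j σ ∈ F
    · rwa [if_pos hinF] at hmem
    rw [if_neg hinF] at hmem
    by_cases hσi : σ i = j
    swap
    · rwa [hfix_ne σ hσi] at hmem
    -- bad case setup
    set π : Equiv.Perm (Fin n) := ijFix i j σ with hπdef
    obtain ⟨hπi, hπu, hπrec⟩ := hrec σ hσi
    set u : Fin n := σ⁻¹ i with hudef
    have hπG : ∀ k, π (a k) = a k := hmem
    have hσu : σ u = i := σ.apply_symm_apply i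
    have hσx : ∀ x, x ≠ i → x ≠ u → σ x = π x := by
      intro x hx1 hx2
      conv_lhs => rw [← hπrec]
      rw [Equiv.Perm.mul_apply, Equiv.swap_apply_of_ne_of_ne hx1 hx2]
    have hu_ne_i : u ≠ i := by
      intro hh
      have h1 := hσu
      rw [hh, hσi] at h1
      exact hij h1.symm
    -- A and complement
    set A : Finset (Fin n) := Finset.univ.map a with hAdef
    have hmemA : ∀ x : Fin n, x ∈ A ↔ ∃ k, a k = x := by
      intro x; simp [hAdef]
    have hAcard : A.card = t := by simp [hAdef]
    have hAccard : Aᶜ.card = n - t := by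
      rw [Finset.card_compl, hAcard]; simp
    have h2Ac : 2 ≤ Aᶜ.card := by omega
    have hπA : ∀ x ∈ A, π x = x := by
      intro x hx
      obtain ⟨k, rfl⟩ := (hmemA x).mp hx
      exact hπG k
    have hu_j : (∃ k, a k = j) → u = j := by
      rintro ⟨k, hk⟩
      apply π.injective
      rw [hπu, hπA j ((hmemA j).mpr ⟨k, hk⟩)]
    have hu_nA : (¬ ∃ k, a k = j) → u ∉ A := by
      intro hj hu
      obtain ⟨k, hk⟩ := (hmemA u).mp hu
      have h1 : π u = u := by rw [← hk]; exact hπG k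
      exact hj ⟨k, hk.trans (h1.symm.trans hπu)⟩
    by_cases hiA : ∃ k, a k = i
    · -- Case 3 : i is a center point; derive contradiction
      exfalso
      obtain ⟨k₀, hk₀⟩ := hiA
      have hiAmem : i ∈ A := (hmemA i).mpr ⟨k₀, hk₀⟩
      have hiAc : i ∉ Aᶜ := by simp [hiAmem]
      obtain ⟨c, hc_out, hc_in, hc_ne, hc_tr⟩ := exists_cyc Aᶜ h2Ac
      have hcG : c ∈ G := by
        intro k
        exact hc_out (a k) (by simp [(hmemA (a k)).mpr ⟨k, rfl⟩])
      have hci : c i = i := hc_out i hiAc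
      set T : Finset (Fin n) := A.erase i with hTdef
      have hTcard : T.card = t - 1 := by
        rw [hTdef, Finset.card_erase_of_mem hiAmem, hAcard]
      have ht0 : 0 < t := k₀.pos
      have final : ∀ τ ∈ F,
          (∀ B : Finset (Fin n), B.Nonempty → (∀ x ∈ B, σ x ∈ B) → (∀ x ∈ B, τ x ∈ B) →
            (∀ x ∈ B, σ x = τ x) → (B ∩ T).Nonempty) → False := by
        intro τ hτF hprop
        obtain ⟨𝒞, hcard, hcc, hdisj⟩ := hF σ hσF τ hτF
        have hle := card_le_of_meets 𝒞 T hdisj fun B hB =>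
          hprop B (hcc B hB).1 (hcc B hB).2.1 (hcc B hB).2.2.1 (hcc B hB).2.2.2.1
        omega
      -- any element of B off T is i or in Aᶜ
      have hoffT : ∀ (B : Finset (Fin n)), ¬ (B ∩ T).Nonempty →
          ∀ x ∈ B, x = i ∨ x ∈ Aᶜ := by
        intro B hB x hx
        rw [Finset.not_nonempty_iff_eq_empty, Finset.eq_empty_iff_forall_notMem] at hB
        have := hB x
        rw [Finset.mem_inter, hTdef, Finset.mem_erase] at this
        by_cases hxi : x = i
        · exact Or.inl hxi
        · right
          rw [Finset.mem_compl]
          intro hxA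
          exact this ⟨hx, hxi, hxA⟩
      by_cases hb : ∀ x ∈ Aᶜ, π x = c x
      · -- branch β : π agrees with c on Aᶜ ; use identity / swap i j
        have hnofix : ∀ x, x = i ∨ x ∈ Aᶜ → σ x ≠ x := by
          rintro x (rfl | hx) hfx
          · rw [hσi] at hfx
            exact hij hfx.symm
          · by_cases hxu : x = u
            · rw [hxu, hσu] at hfx
              exact hu_ne_i hfx.symm
            · have hxi : x ≠ i := fun hh => hiAc (hh ▸ hx)
              rw [hσx x hxi hxu, hb x hx] at hfx
              exact hc_ne x hx hfx
        have h1G : (1 : Equiv.Perm (Fin n)) ∈ G := fun k => rfl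
        rcases dich 1 h1G with h1F | ⟨-, hsF⟩
        · refine final 1 h1F ?_
          intro B hne hinv1 hinv2 hagr
          by_contra hcon
          obtain ⟨x, hx⟩ := hne
          exact hnofix x (hoffT B hcon x hx) (by simpa using hagr x hx)
        · have hswF : Equiv.swap i j ∈ F := by
            have : (1 : Equiv.Perm (Fin n)) * Equiv.swap i ((1 : Equiv.Perm (Fin n))⁻¹ j)
                = Equiv.swap i j := by simp
            rwa [this] at hsF
          refine final _ hswF ?_
          intro B hne hinv1 hinv2 hagr
          by_contra hcon
          have hB2 : ∀ x ∈ B, x = i ∨ x = j := by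
            intro x hx
            by_contra hh
            push_neg at hh
            have := hagr x hx
            rw [Equiv.swap_apply_of_ne_of_ne hh.1 hh.2] at this
            exact hnofix x (hoffT B hcon x hx) this
          have hjB : j ∈ B := by
            obtain ⟨x, hx⟩ := hne
            rcases hB2 x hx with rfl | rfl
            · have := hinv1 x hx
              rwa [hσi] at this
            · exact hx
          have hjAc : j ∈ Aᶜ := by
            rcases hoffT B hcon j hjB with hh | hh
            · exact absurd hh hij.symm
            · exact hh
          have hσjB := hinv1 j hjB
          rcases hB2 _ hσjB with hh | hh
          · -- σ j = i, so u = j, but π j = c j ≠ j while π u = j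
            have huj2 : u = j := σ.injective (hσu.trans hh.symm)
            have : π j = j := by
              conv_lhs => rw [← huj2]
              exact hπu
            rw [hb j hjAc] at this
            exact hc_ne j hjAc this
          · exact hnofix j (Or.inr hjAc) hh
      · -- branch α : π differs from c somewhere on Aᶜ
        push_neg at hb
        obtain ⟨x₀, hx₀Ac, hx₀ne⟩ := hb
        rcases dich c hcG with hcF | ⟨-, hgF⟩
        · refine final c hcF ?_
          intro B hne hinv1 hinv2 hagr
          by_contra hcon
          have hiB : i ∉ B := by
            intro hiB
            have := hagr i hiB
            rw [hσi, hci] at this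
            exact hij this.symm
          have hBA : ∀ x ∈ B, x ∈ Aᶜ := by
            intro x hx
            rcases hoffT B hcon x hx with rfl | hh
            · exact absurd hx hiB
            · exact hh
          have huB : u ∉ B := by
            intro huB
            have := hinv1 u huB
            rw [hσu] at this
            exact hiB this
          have hall : ∀ y ∈ Aᶜ, y ∈ B := hc_tr B hinv2 hBA hne
          by_cases hjA : ∃ k, a k = j
          · have huj := hu_j hjA
            apply hx₀ne
            have hx₀B := hall x₀ hx₀Ac
            have hx₀i : x₀ ≠ i := fun hh => hiAc (hh ▸ hx₀Ac)
            have hx₀u : x₀ ≠ u := fun hh => huB (hh ▸ hx₀B)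
            rw [← hσx x₀ hx₀i hx₀u]
            exact hagr x₀ hx₀B
          · have huAc : u ∈ Aᶜ := Finset.mem_compl.mpr (hu_nA hjA)
            exact huB (hall u huAc)
        · -- τ = c * swap i (c⁻¹ j) ∈ F
          by_cases hjA : ∃ k, a k = j
          · -- j ∈ A : c⁻¹ j = j
            have hjAmem : j ∈ A := (hmemA j).mpr hjA
            have hcj : c j = j := hc_out j (by simp [hjAmem])
            have hcinvj : c⁻¹ j = j := by
              apply c.injective; rw [(perm_apply_inv_self' c j), hcj]
            rw [hcinvj] at hgF
            have huj := hu_j hjA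
            refine final _ hgF ?_
            intro B hne hinv1 hinv2 hagr
            by_contra hcon
            have hiB : i ∉ B := by
              intro hiB
              have hjB : j ∈ B := by
                have := hinv1 i hiB; rwa [hσi] at this
              rcases hoffT B hcon j hjB with hh | hh
              · exact hij.symm hh
              · exact (Finset.mem_compl.mp hh) hjAmem
            have hBA : ∀ x ∈ B, x ∈ Aᶜ := by
              intro x hx
              rcases hoffT B hcon x hx with rfl | hh
              · exact absurd hx hiB
              · exact hh
            have hcinv : ∀ x ∈ B, c x ∈ B := by
              intro x hx
              have hxAc := hBA x hx
              have hxi : x ≠ i := fun hh => hiAc (hh ▸ hxAc)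
              have hxj : x ≠ j := fun hh => (Finset.mem_compl.mp (hh ▸ hxAc)) hjAmem
              have := hinv2 x hx
              rwa [Equiv.Perm.mul_apply, Equiv.swap_apply_of_ne_of_ne hxi hxj] at this
            have hall : ∀ y ∈ Aᶜ, y ∈ B := hc_tr B hcinv hBA hne
            apply hx₀ne
            have hx₀B := hall x₀ hx₀Ac
            have hx₀i : x₀ ≠ i := fun hh => hiAc (hh ▸ hx₀Ac)
            have hx₀u : x₀ ≠ u := by
              intro hh
              have huA : u ∈ A := by rw [huj]; exact hjAmem
              exact (Finset.mem_compl.mp (hh ▸ hx₀Ac)) huA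
            have hx₀j : x₀ ≠ j := by
              intro hh
              rw [hh] at hx₀Ac
              exact (Finset.mem_compl.mp hx₀Ac) hjAmem
            rw [← hσx x₀ hx₀i hx₀u]
            have := hagr x₀ hx₀B
            rw [Equiv.Perm.mul_apply, Equiv.swap_apply_of_ne_of_ne hx₀i hx₀j] at this
            exact this
          · -- j ∉ A
            have hjAc : j ∈ Aᶜ := Finset.mem_compl.mpr (fun hh => hjA ((hmemA j).mp hh))
            have huAc : u ∈ Aᶜ := Finset.mem_compl.mpr (hu_nA hjA)
            have hcinvjAc : c⁻¹ j ∈ Aᶜ := by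
              by_contra hh
              have := hc_out _ hh
              rw [(perm_apply_inv_self' c j)] at this
              exact hh (this ▸ hjAc)
            have hcinvji : c⁻¹ j ≠ i := fun hh => hiAc (hh ▸ hcinvjAc)
            set g' : Equiv.Perm (Fin n) := c * Equiv.swap i (c⁻¹ j) with hg'def
            have hg'i : g' i = j := by
              rw [hg'def, Equiv.Perm.mul_apply, Equiv.swap_apply_left, (perm_apply_inv_self' c j)]
            have hg'cj : g' (c⁻¹ j) = i := by
              rw [hg'def, Equiv.Perm.mul_apply, Equiv.swap_apply_right, hci]
            have hg'x : ∀ x, x ≠ i → x ≠ c⁻¹ j → g' x = c x := by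
              intro x h1 h2
              rw [hg'def, Equiv.Perm.mul_apply, Equiv.swap_apply_of_ne_of_ne h1 h2]
            refine final g' hgF ?_
            intro B hne hinv1 hinv2 hagr
            by_contra hcon
            by_cases hiB : i ∈ B
            · -- B contains i : then B ⊇ {i} ∪ Aᶜ and σ = g'
              have hjB : j ∈ B := by
                have := hinv1 i hiB; rwa [hσi] at this
              have hsub' : ∀ y ∈ Aᶜ, y ∈ B.erase i := by
                apply hc_tr
                · intro y hy
                  obtain ⟨hyi, hyB⟩ := Finset.mem_erase.mp hy
                  have hyAc : y ∈ Aᶜ := by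
                    rcases hoffT B hcon y hyB with rfl | hh
                    · exact absurd rfl hyi
                    · exact hh
                  by_cases hyc : y = c⁻¹ j
                  · rw [hyc, (perm_apply_inv_self' c j)]
                    exact Finset.mem_erase.mpr ⟨hij.symm, hjB⟩
                  · have hyi' : y ≠ i := hyi
                    have : g' y = c y := hg'x y hyi' hyc
                    refine Finset.mem_erase.mpr ⟨?_, this ▸ hinv2 y hyB⟩
                    intro hh
                    exact hiAc (hh ▸ hc_in y hyAc)
                · intro y hy
                  obtain ⟨hyi, hyB⟩ := Finset.mem_erase.mp hy
                  rcases hoffT B hcon y hyB with rfl | hh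
                  · exact absurd rfl hyi
                  · exact hh
                · exact ⟨j, Finset.mem_erase.mpr ⟨hij.symm, hjB⟩⟩
              -- σ = g'
              have hσg' : σ = g' := by
                apply Equiv.ext
                intro x
                by_cases hxB : x ∈ B
                · exact hagr x hxB
                · have hxi : x ≠ i := fun hh => hxB (hh ▸ hiB)
                  have hxA : x ∈ A := by
                    by_contra hh
                    exact hxB (Finset.mem_of_mem_erase (hsub' x (Finset.mem_compl.mpr hh)))
                  have hxu : x ≠ u := fun hh => (Finset.mem_compl.mp (hh ▸ huAc)) hxA
                  have hxcj : x ≠ c⁻¹ j := fun hh =>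
                    (Finset.mem_compl.mp (hh ▸ hcinvjAc)) hxA
                  rw [hσx x hxi hxu, hπA x hxA, hg'x x hxi hxcj,
                    hc_out x (by simp [hxA])]
              -- then π = c on Aᶜ, contradiction
              have hucj : u = c⁻¹ j := by
                rw [hudef]
                apply σ.injective
                rw [(perm_apply_inv_self' σ i), hσg', hg'cj]
              apply hx₀ne
              by_cases hx₀u : x₀ = u
              · rw [hx₀u, hπu, hucj, (perm_apply_inv_self' c j)]
              · have hx₀i : x₀ ≠ i := fun hh => hiAc (hh ▸ hx₀Ac)
                rw [← hσx x₀ hx₀i hx₀u, hσg', hg'x x₀ hx₀i (hucj ▸ hx₀u)]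
            · -- i ∉ B : B ⊆ Aᶜ, c-invariant, must contain c⁻¹ j, contradiction
              have hBA : ∀ x ∈ B, x ∈ Aᶜ := by
                intro x hx
                rcases hoffT B hcon x hx with rfl | hh
                · exact absurd hx hiB
                · exact hh
              have hcjB : c⁻¹ j ∉ B := by
                intro hh
                have := hinv2 _ hh
                rw [hg'cj] at this
                exact hiB this
              have hcinv : ∀ x ∈ B, c x ∈ B := by
                intro x hx
                have hxi : x ≠ i := fun hh => hiB (hh ▸ hx)
                have hxcj : x ≠ c⁻¹ j := fun hh => hcjB (hh ▸ hx)
                have := hinv2 x hx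
                rwa [← hg'x x hxi hxcj]
              exact hcjB (hc_tr B hcinv hBA hne _ hcinvjAc)
    · -- i is not a center point
      by_cases hjA : ∃ k, a k = j
      · -- Case 2 : j ∈ A, i ∉ A : contradiction
        exfalso
        obtain ⟨k₁, hk₁⟩ := hjA
        have hjAmem : j ∈ A := (hmemA j).mpr ⟨k₁, hk₁⟩
        have huj := hu_j ⟨k₁, hk₁⟩
        have hσj : σ j = i := huj ▸ hσu
        have hiAc : i ∈ Aᶜ := Finset.mem_compl.mpr (fun hh => hiA ((hmemA i).mp hh))
        obtain ⟨c, hc_out, hc_in, hc_ne, hc_tr⟩ := exists_cyc Aᶜ h2Ac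
        have hcG : c ∈ G := by
          intro k
          exact hc_out (a k) (by simp [(hmemA (a k)).mpr ⟨k, rfl⟩])
        have hcF : c ∈ F := by
          rcases dich c hcG with hh | ⟨hh, -⟩
          · exact hh
          · exact absurd hh (hc_ne i hiAc)
        obtain ⟨𝒞, hcard, hcc, hdisj⟩ := hF σ hσF c hcF
        set T : Finset (Fin n) := A.erase j with hTdef
        have hTcard : T.card = t - 1 := by
          rw [hTdef, Finset.card_erase_of_mem hjAmem, hAcard]
        have ht0 : 0 < t := k₁.pos
        have hle := card_le_of_meets 𝒞 T hdisj ?_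
        · omega
        intro B hB
        obtain ⟨hne, hinv1, hinv2, hagr, -⟩ := hcc B hB
        by_contra hcon
        have hoffT : ∀ x ∈ B, x = j ∨ x ∈ Aᶜ := by
          intro x hx
          rw [Finset.not_nonempty_iff_eq_empty, Finset.eq_empty_iff_forall_notMem] at hcon
          have := hcon x
          rw [Finset.mem_inter, hTdef, Finset.mem_erase] at this
          by_cases hxj : x = j
          · exact Or.inl hxj
          · right
            rw [Finset.mem_compl]
            intro hxA
            exact this ⟨hx, hxj, hxA⟩
        by_cases hjB : j ∈ B
        · have := hagr j hjB
          rw [hσj, hc_out j (by simp [hjAmem])] at this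
          exact hij this
        · have hBA : ∀ x ∈ B, x ∈ Aᶜ := by
            intro x hx
            rcases hoffT x hx with rfl | hh
            · exact absurd hx hjB
            · exact hh
          have hiB : i ∈ B := hc_tr B hinv2 hBA hne i hiAc
          have := hagr i hiB
          rw [hσi] at this
          exact (Finset.mem_compl.mp (this ▸ hc_in i hiAc)) hjAmem
      · -- Case 1 : neither i nor j is a center : σ fixes all centers
        intro k
        have hki : a k ≠ i := fun hh => hiA ⟨k, hh⟩
        have hku : a k ≠ u := by
          intro hh
          exact (hu_nA hjA) ((hmemA u).mpr ⟨k, hh⟩)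
        rw [hσx (a k) hki hku]
        exact hπG k
  -- conclude F = G
  refine ⟨a, ?_⟩
  have hcard : G.ncard ≤ F.ncard := by
    rw [← hMF, Set.ncard_image_of_injOn hinj]
  exact Set.eq_of_subset_of_ncard_le hsub hcard (Set.toFinite _)
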